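/- Let κ < 0, u₀ < 0, and let (u,v) solve u' = v/√(1+v²), v' = κu on ℝ with u(0) = u₀, v(0) = 0. Then u is periodic, u₀ ≤ u(r) ≤ -u₀ for all r, u attains the values ±u₀ exactly at its critical points, and the zeros of u coincide with the inflection points of u (points where u'' = 0). -/

import Mathlib

open Real Set

lemma pend_sq_pos (a : ℝ) : (0:ℝ) < 1 + a ^ 2 := by positivity

lemma pend_sqrt_pos (a : ℝ) : 0 < Real.sqrt (1 + a ^ 2) := Real.sqrt_pos.2 (pend_sq_pos a)

lemma pend_sqrt_one_le (a : ℝ) : 1 ≤ Real.sqrt (1 + a ^ 2) := by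
  have h := Real.sq_sqrt (pend_sq_pos a).le
  nlinarith [pend_sqrt_pos a, sq_nonneg a]

lemma pend_hasDerivAt_comp {v : ℝ → ℝ} {v' : ℝ} {r : ℝ} (hv : HasDerivAt v v' r) :
    HasDerivAt (fun s => v s / Real.sqrt (1 + v s ^ 2))
      (v' / ((1 + v r ^ 2) * Real.sqrt (1 + v r ^ 2))) r := by
  have h1 : HasDerivAt (fun s => 1 + v s ^ 2) (2 * v r * v') r := by
    simpa [mul_comm] using (hv.pow 2).const_add 1
  have h2 : HasDerivAt (fun s => Real.sqrt (1 + v s ^ 2))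
      ((2 * v r * v') / (2 * Real.sqrt (1 + v r ^ 2))) r :=
    h1.sqrt (ne_of_gt (pend_sq_pos _))
  have h3 := hv.div h2 (ne_of_gt (pend_sqrt_pos (v r)))
  refine h3.congr_deriv ?_
  have hs := Real.sq_sqrt (pend_sq_pos (v r)).le
  have hspos := pend_sqrt_pos (v r)
  field_simp
  linear_combination (v' * v r ^ 2) * hs

lemma mono_aux {h d : ℝ → ℝ} (hd : ∀ x, HasDerivAt h (d x) x) {a b : ℝ}
    (hab : a ≤ b) (hnn : ∀ x ∈ Set.Icc a b, 0 ≤ d x) : h a ≤ h b := by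
  have := monotoneOn_of_hasDerivWithinAt_nonneg (f' := d) (convex_Icc a b)
    (fun x _ => (hd x).continuousAt.continuousWithinAt)
    (fun x hx => (hd x).hasDerivWithinAt.mono interior_subset)
    (fun x hx => hnn x (interior_subset hx))
  exact this (left_mem_Icc.2 hab) (right_mem_Icc.2 hab) hab

lemma ode_forward_unique {f : ℝ × ℝ → ℝ × ℝ} {K : NNReal} (hf : LipschitzWith K f)
    {y z : ℝ → ℝ × ℝ} (hy : ∀ t, HasDerivAt y (f (y t)) t) (hz : ∀ t, HasDerivAt z (f (z t)) t)
    {a t : ℝ} (heq : y a = z a) (hat : a ≤ t) : y t = z t := by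
  have := ODE_solution_unique (v := fun _ p => f p) (fun _ => hf)
    (fun s _ => (hy s).continuousAt.continuousWithinAt)
    (fun s _ => (hy s).hasDerivWithinAt)
    (fun s _ => (hz s).continuousAt.continuousWithinAt)
    (fun s _ => (hz s).hasDerivWithinAt) heq (b := t)
  exact this ⟨hat, le_refl t⟩

noncomputable def pendG (a : ℝ) : ℝ := a / Real.sqrt (1 + a ^ 2)

lemma pendG_lipschitz : LipschitzWith 1 pendG := by
  have hderiv : ∀ a : ℝ, HasDerivAt pendG (1 / ((1 + a ^ 2) * Real.sqrt (1 + a ^ 2))) a := by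
    intro a
    show HasDerivAt (fun s => s / Real.sqrt (1 + s ^ 2)) _ a
    simpa using pend_hasDerivAt_comp (hasDerivAt_id a)
  apply lipschitzWith_of_nnnorm_deriv_le (fun a => (hderiv a).differentiableAt)
  intro a
  rw [(hderiv a).deriv, ← NNReal.coe_le_coe, coe_nnnorm, Real.norm_eq_abs, NNReal.coe_one]
  have h1 := pend_sqrt_pos a
  have h2 := pend_sqrt_one_le a
  rw [abs_of_nonneg (by positivity)]
  rw [div_le_one (by positivity)]
  nlinarith [sq_nonneg a]

set_option maxHeartbeats 1000000 in
theorem stmt_17 (κ u₀ : ℝ) (hκ : κ < 0) (hu₀ : u₀ < 0) (u v w : ℝ → ℝ)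
    (hu : ∀ r : ℝ, HasDerivAt u (v r / Real.sqrt (1 + v r ^ 2)) r)
    (hv : ∀ r : ℝ, HasDerivAt v (κ * u r) r)
    (hw : ∀ r : ℝ, HasDerivAt (fun s => v s / Real.sqrt (1 + v s ^ 2)) (w r) r)
    (hu0 : u 0 = u₀) (hv0 : v 0 = 0) :
    (∃ T : ℝ, 0 < T ∧ Function.Periodic u T) ∧
    (∀ r : ℝ, u₀ ≤ u r ∧ u r ≤ -u₀) ∧
    (∀ r : ℝ, v r = 0 ↔ (u r = u₀ ∨ u r = -u₀)) ∧
    (∀ r : ℝ, u r = 0 ↔ w r = 0) := by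
  -- conserved energy, in the form κ u² − 2(√(1+v²)−1) = κ u₀²
  have hE : ∀ r : ℝ, κ * u r ^ 2 = κ * u₀ ^ 2 + 2 * (Real.sqrt (1 + v r ^ 2) - 1) := by
    have hF : ∀ r : ℝ, HasDerivAt
        (fun r => κ * u r ^ 2 - 2 * (Real.sqrt (1 + v r ^ 2) - 1)) 0 r := by
      intro r
      have h1 : HasDerivAt (fun s => u s ^ 2) (2 * u r * (v r / Real.sqrt (1 + v r ^ 2))) r := by
        simpa [mul_comm] using (hu r).fun_pow 2
      have h2 : HasDerivAt (fun s => 1 + v s ^ 2) (2 * v r * (κ * u r)) r := by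
        simpa [mul_comm] using ((hv r).pow 2).const_add 1
      have h3 : HasDerivAt (fun s => Real.sqrt (1 + v s ^ 2))
          ((2 * v r * (κ * u r)) / (2 * Real.sqrt (1 + v r ^ 2))) r :=
        h2.sqrt (ne_of_gt (pend_sq_pos _))
      have h4 := (h1.const_mul κ).sub (((h3.sub_const 1)).const_mul 2)
      refine h4.congr_deriv ?_
      have hspos := pend_sqrt_pos (v r)
      field_simp
      ring
    have hc : ∀ r : ℝ, (fun r => κ * u r ^ 2 - 2 * (Real.sqrt (1 + v r ^ 2) - 1)) r
        = (fun r => κ * u r ^ 2 - 2 * (Real.sqrt (1 + v r ^ 2) - 1)) 0 :=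
      fun r => is_const_of_deriv_eq_zero (fun x => (hF x).differentiableAt)
        (fun x => (hF x).deriv) r 0
    intro r
    have := hc r
    simp only [hu0, hv0] at this
    norm_num at this
    linarith [this]
  -- bounds
  have hsq : ∀ r : ℝ, u r ^ 2 ≤ u₀ ^ 2 := by
    intro r
    have h1 := hE r
    have h2 := pend_sqrt_one_le (v r)
    nlinarith
  have hbound : ∀ r : ℝ, u₀ ≤ u r ∧ u r ≤ -u₀ := by
    intro r
    have h := hsq r
    constructor <;> nlinarith
  -- critical points
  have hiff3 : ∀ r : ℝ, v r = 0 ↔ (u r = u₀ ∨ u r = -u₀) := by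
    intro r
    constructor
    · intro h
      have h1 := hE r
      rw [h] at h1
      norm_num at h1
      have h2 : u r ^ 2 = u₀ ^ 2 := by
        rcases h1 with h1 | h1
        · exact h1
        · exact absurd h1 (ne_of_lt hκ)
      have h3 : (u r - u₀) * (u r + u₀) = 0 := by linear_combination h2
      rcases mul_eq_zero.1 h3 with h4 | h4
      · left; linarith
      · right; linarith
    · intro h
      have h2 : u r ^ 2 = u₀ ^ 2 := by rcases h with h | h <;> rw [h] <;> ring
      have h1 := hE r
      rw [h2] at h1
      have h3 : Real.sqrt (1 + v r ^ 2) = 1 := by linarith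
      have h4 := Real.sq_sqrt (pend_sq_pos (v r)).le
      rw [h3] at h4
      have : v r ^ 2 = 0 := by nlinarith
      exact pow_eq_zero_iff two_ne_zero |>.1 this
  -- inflection points
  have hwval : ∀ r : ℝ, w r = κ * u r / ((1 + v r ^ 2) * Real.sqrt (1 + v r ^ 2)) :=
    fun r => (hw r).unique (pend_hasDerivAt_comp (hv r))
  have hiff4 : ∀ r : ℝ, u r = 0 ↔ w r = 0 := by
    intro r
    rw [hwval r]
    constructor
    · intro h; rw [h]; simp
    · intro h
      have hden : (1 + v r ^ 2) * Real.sqrt (1 + v r ^ 2) ≠ 0 := by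
        positivity
      rcases div_eq_zero_iff.1 h with h1 | h1
      · rcases mul_eq_zero.1 h1 with h2 | h2
        · exact absurd h2 (ne_of_lt hκ)
        · exact h2
      · exact absurd h1 hden
  -- setup for ODE uniqueness
  have hKex : ∃ K : NNReal, LipschitzWith K (fun p : ℝ × ℝ => (pendG p.2, κ * p.1)) := by
    have h1 : LipschitzWith (1 * 1) (fun p : ℝ × ℝ => pendG p.2) :=
      pendG_lipschitz.comp LipschitzWith.prod_snd
    have h2 : LipschitzWith ‖κ‖₊ (fun x : ℝ => κ * x) := by
      simpa [smul_eq_mul] using lipschitzWith_smul (β := ℝ) κ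
    have h3 : LipschitzWith (‖κ‖₊ * 1) (fun p : ℝ × ℝ => κ * p.1) :=
      h2.comp LipschitzWith.prod_fst
    exact ⟨_, h1.prodMk h3⟩
  obtain ⟨K, hK⟩ := hKex
  have hy : ∀ r : ℝ, HasDerivAt (fun s => (u s, v s))
      ((fun p : ℝ × ℝ => (pendG p.2, κ * p.1)) (u r, v r)) r := fun r => (hu r).prodMk (hv r)
  -- evenness of u
  have heven : ∀ r : ℝ, u (-r) = u r := by
    have hz : ∀ r : ℝ, HasDerivAt (fun s => (u (-s), -v (-s)))
        ((fun p : ℝ × ℝ => (pendG p.2, κ * p.1)) (u (-r), -v (-r))) r := by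
      intro r
      have h1 : HasDerivAt (fun s : ℝ => u (-s))
          (-v (-r) / Real.sqrt (1 + (-v (-r)) ^ 2)) r := by
        have := (hu (-r)).comp r (hasDerivAt_neg r)
        refine this.congr_deriv ?_
        rw [neg_sq]
        ring
      have h2 : HasDerivAt (fun s : ℝ => -v (-s)) (κ * u (-r)) r := by
        simpa [Function.comp_def, Pi.neg_def] using ((hv (-r)).comp r (hasDerivAt_neg r)).neg
      exact h1.prodMk h2
    have heq0 : (fun s : ℝ => (u s, v s)) 0 = (fun s : ℝ => (u (-s), -v (-s))) 0 := by
      simp [hv0]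
    have key : ∀ r : ℝ, 0 ≤ r → u (-r) = u r := by
      intro r hr
      have := ode_forward_unique hK hy hz heq0 hr
      exact (congrArg Prod.fst this).symm
    intro r
    rcases le_total 0 r with h | h
    · exact key r h
    · have := key (-r) (by linarith)
      rw [neg_neg] at this
      exact this.symm
  -- existence of a positive time where v vanishes
  have hT0 : ∃ T₀ : ℝ, 0 < T₀ ∧ v T₀ = 0 := by
    by_contra hcon
    push_neg at hcon
    have hvcont : Continuous v := continuous_iff_continuousAt.2 fun r => (hv r).continuousAt
    have hκu₀sq : 0 < -κ * (u₀ * u₀) :=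
      mul_pos (neg_pos.2 hκ) (mul_pos_of_neg_of_neg hu₀ hu₀)
    -- bound on v
    obtain ⟨B, hBdef⟩ : ∃ B : ℝ, B = 1 - κ * u₀ ^ 2 / 2 := ⟨_, rfl⟩
    have hB1 : 1 < B := by nlinarith
    have hvB : ∀ r : ℝ, Real.sqrt (1 + v r ^ 2) ≤ B := by
      intro r
      have h1 := hE r
      have h2 : 0 ≤ -κ * u r ^ 2 := mul_nonneg (neg_nonneg.2 hκ.le) (sq_nonneg (u r))
      nlinarith
    obtain ⟨C, hCdef⟩ : ∃ C : ℝ, C = Real.sqrt (B ^ 2 - 1) := ⟨_, rfl⟩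
    have hCnn : 0 ≤ C := by rw [hCdef]; exact Real.sqrt_nonneg _
    have hCsq : C ^ 2 = B ^ 2 - 1 := by rw [hCdef]; exact Real.sq_sqrt (by nlinarith)
    have hvC : ∀ r : ℝ, v r ≤ C ∧ -C ≤ v r := by
      intro r
      have h1 := hvB r
      have h2 := Real.sq_sqrt (pend_sq_pos (v r)).le
      have h3 := pend_sqrt_pos (v r)
      have h4 : Real.sqrt (1 + v r ^ 2) * Real.sqrt (1 + v r ^ 2) ≤ B * B :=
        mul_le_mul h1 h1 h3.le (by linarith)
      constructor <;> nlinarith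
    -- v has constant sign on (0, ∞)
    have hIVT : ∀ p q : ℝ, 0 < p → 0 < q → v p < 0 → 0 < v q → False := by
      intro p q hp hq hvp hvq
      rcases le_total p q with h | h
      · obtain ⟨x, hx, hvx⟩ := intermediate_value_Icc h hvcont.continuousOn ⟨hvp.le, hvq.le⟩
        exact hcon x (lt_of_lt_of_le hp hx.1) hvx
      · obtain ⟨x, hx, hvx⟩ := intermediate_value_Icc' h hvcont.continuousOn ⟨hvp.le, hvq.le⟩
        exact hcon x (lt_of_lt_of_le hq hx.1) hvx
    have hsign : (∀ r, 0 < r → 0 < v r) ∨ (∀ r, 0 < r → v r < 0) := by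
      rcases lt_or_gt_of_ne (hcon 1 one_pos) with h1 | h1
      · right; intro r hr
        rcases lt_or_gt_of_ne (hcon r hr) with h | h
        · exact h
        · exact absurd (hIVT 1 r one_pos hr h1 h) not_false
      · left; intro r hr
        rcases lt_or_gt_of_ne (hcon r hr) with h | h
        · exact absurd (hIVT r 1 hr one_pos h h1) not_false
        · exact h
    rcases hsign with hpos | hneg
    · -- v positive on (0,∞)
      have humono : ∀ a b : ℝ, 0 ≤ a → a ≤ b → u a ≤ u b := by
        intro a b ha hab
        apply mono_aux (d := fun x => v x / Real.sqrt (1 + v x ^ 2)) hu hab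
        intro x hx
        have hxnn : 0 ≤ v x := by
          rcases (ha.trans hx.1).lt_or_eq with h | h
          · exact (hpos x h).le
          · rw [← h, hv0]
        positivity
      by_cases h1 : ∃ t₀, 0 ≤ t₀ ∧ u₀ / 2 ≤ u t₀
      · obtain ⟨t₀, ht₀, hut₀⟩ := h1
        by_cases h2 : ∃ t₁, t₀ ≤ t₁ ∧ 0 < u t₁
        · -- u becomes positive: v must decrease past every bound
          obtain ⟨t₁, ht₁, hut₁⟩ := h2
          have ht₁0 : 0 ≤ t₁ := ht₀.trans ht₁
          have hden : 0 < -κ * u t₁ := mul_pos (by linarith) hut₁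
          have hden' : -κ * u t₁ ≠ 0 := ne_of_gt hden
          obtain ⟨R, hRdef⟩ : ∃ R : ℝ, R = t₁ + (2 * C + 1) / (-κ * u t₁) := ⟨_, rfl⟩
          have hRt : t₁ ≤ R := by rw [hRdef]; exact le_add_of_nonneg_right (div_nonneg (by linarith) hden.le)
          have hd : ∀ x : ℝ, HasDerivAt (fun s => -v s + κ * u t₁ * s)
              (-(κ * u x) + κ * u t₁) x := by
            intro x
            exact (hv x).neg.add (by simpa using (hasDerivAt_id x).const_mul (κ * u t₁))
          have hmono := mono_aux hd hRt ?_
          · have hmono' : -v t₁ + κ * u t₁ * t₁ ≤ -v R + κ * u t₁ * R := hmono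
            have ht₁pos : 0 < t₁ := by
              rcases ht₁0.lt_or_eq with h | h
              · exact h
              · exfalso; rw [← h, hu0] at hut₁; linarith
            have hvRpos := hpos R (lt_of_lt_of_le ht₁pos hRt)
            have hcomp : κ * u t₁ * R - κ * u t₁ * t₁ = -(2 * C + 1) := by
              have hκne : κ ≠ 0 := ne_of_lt hκ
              have hu₁ne : u t₁ ≠ 0 := ne_of_gt hut₁
              rw [hRdef]
              field_simp
              ring
            have hvt₁ := (hvC t₁).1
            linarith
          · intro x hx
            have h5 : 0 ≤ -κ * (u x - u t₁) :=
              mul_nonneg (neg_nonneg.2 hκ.le)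
                (sub_nonneg.2 (humono t₁ x ht₁0 hx.1))
            nlinarith
        · -- u stays in [u₀/2, 0] beyond t₀
          push_neg at h2
          have ht₀pos : 0 < t₀ := by
            rcases ht₀.lt_or_eq with h | h
            · exact h
            · exfalso; rw [← h, hu0] at hut₀; linarith
          obtain ⟨Bc, hBcdef⟩ : ∃ Bc : ℝ, Bc = 1 - κ * (3 / 8) * u₀ ^ 2 := ⟨_, rfl⟩
          have hBc1 : 1 < Bc := by nlinarith
          obtain ⟨c, hcdef⟩ : ∃ c : ℝ, c = Real.sqrt (Bc ^ 2 - 1) := ⟨_, rfl⟩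
          have hcpos : 0 < c := by rw [hcdef]; exact Real.sqrt_pos.2 (by nlinarith)
          have hcsq : c ^ 2 = Bc ^ 2 - 1 := by rw [hcdef]; exact Real.sq_sqrt (by nlinarith)
          have hlow : ∀ x : ℝ, t₀ ≤ x → c ≤ v x := by
            intro x hx
            have hux0 : u x ≤ 0 := h2 x hx
            have hux1 : u₀ / 2 ≤ u x := le_trans hut₀ (humono t₀ x ht₀ hx)
            have husq : u x ^ 2 ≤ u₀ ^ 2 / 4 := by nlinarith
            have hEx := hE x
            have hprod : 0 ≤ -κ * (u₀ ^ 2 / 4 - u x ^ 2) :=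
              mul_nonneg (neg_nonneg.2 hκ.le) (by linarith)
            have hsx : Bc ≤ Real.sqrt (1 + v x ^ 2) := by nlinarith
            have hsq2 := Real.sq_sqrt (pend_sq_pos (v x)).le
            have hvxpos : 0 < v x := hpos x (lt_of_lt_of_le ht₀pos hx)
            have h4 : Bc * Bc ≤ Real.sqrt (1 + v x ^ 2) * Real.sqrt (1 + v x ^ 2) :=
              mul_le_mul hsx hsx (by linarith) (Real.sqrt_nonneg _)
            nlinarith
          obtain ⟨m, hmdef⟩ : ∃ m : ℝ, m = c / Real.sqrt (1 + C ^ 2) := ⟨_, rfl⟩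
          have hmpos : 0 < m := by rw [hmdef]; exact div_pos hcpos (pend_sqrt_pos C)
          obtain ⟨R, hRdef⟩ : ∃ R : ℝ, R = t₀ + (-u₀) / m + 1 := ⟨_, rfl⟩
          have hRt : t₀ ≤ R := by
            have h5 : 0 ≤ (-u₀) / m := div_nonneg (by linarith) hmpos.le
            rw [hRdef]; linarith
          have hd : ∀ x : ℝ, HasDerivAt (fun s => u s - m * s)
              (v x / Real.sqrt (1 + v x ^ 2) - m) x := by
            intro x
            exact (hu x).sub (by simpa using (hasDerivAt_id x).const_mul m)
          have hmono := mono_aux hd hRt ?_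
          · have hmono' : u t₀ - m * t₀ ≤ u R - m * R := hmono
            have huR : u R ≤ 0 := h2 R hRt
            have hcalc : m * R - m * t₀ = -u₀ + m := by
              have hmne : m ≠ 0 := ne_of_gt hmpos
              rw [hRdef]
              field_simp
              ring
            linarith [(hbound t₀).1]
          · intro x hx
            have hvx := hlow x hx.1
            have hvxC := (hvC x).1
            have hs1 : Real.sqrt (1 + v x ^ 2) ≤ Real.sqrt (1 + C ^ 2) :=
              Real.sqrt_le_sqrt (by nlinarith)
            have hle : m ≤ v x / Real.sqrt (1 + v x ^ 2) := by
              rw [hmdef]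
              exact div_le_div₀ (by linarith) hvx (pend_sqrt_pos (v x)) hs1
            linarith
      · -- u stays below u₀/2 : v grows past every bound
        push_neg at h1
        have hα : 0 < κ * u₀ / 2 := by
          have h5 := mul_pos_of_neg_of_neg hκ hu₀
          linarith
        obtain ⟨R, hRdef⟩ : ∃ R : ℝ, R = (2 * C + 1) / (κ * u₀ / 2) := ⟨_, rfl⟩
        have hR0 : 0 ≤ R := by rw [hRdef]; exact div_nonneg (by linarith) hα.le
        have hd : ∀ x : ℝ, HasDerivAt (fun s => v s - κ * u₀ / 2 * s)
            (κ * u x - κ * u₀ / 2) x := by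
          intro x
          exact (hv x).sub (by simpa using (hasDerivAt_id x).const_mul (κ * u₀ / 2))
        have hmono := mono_aux hd hR0 ?_
        · have hmono' : v 0 - κ * u₀ / 2 * 0 ≤ v R - κ * u₀ / 2 * R := hmono
          have hcalc : κ * u₀ / 2 * R = 2 * C + 1 := by
            have hκne : κ ≠ 0 := ne_of_lt hκ
            have hu₀ne : u₀ ≠ 0 := ne_of_lt hu₀
            rw [hRdef]
            field_simp
          have hvR := (hvC R).1
          rw [hv0] at hmono'
          linarith
        · intro x hx
          have h5 := h1 x hx.1
          have h6 : 0 < -κ * (u₀ / 2 - u x) :=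
            mul_pos (neg_pos.2 hκ) (by linarith)
          nlinarith
    · -- v negative on (0,∞): impossible
      have hd : ∀ x : ℝ, HasDerivAt (fun s => -u s)
          (-(v x / Real.sqrt (1 + v x ^ 2))) x := fun x => (hu x).neg
      have hmono := mono_aux hd zero_le_one ?_
      · have hmono' : -u 0 ≤ -u 1 := hmono
        have h1 : u 1 = u₀ := le_antisymm (by rw [hu0] at hmono'; linarith) (hbound 1).1
        have h2 := (hiff3 1).2 (Or.inl h1)
        exact hcon 1 one_pos h2
      · intro x hx
        have hxn : v x ≤ 0 := by
          rcases hx.1.lt_or_eq with h | h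
          · exact (hneg x h).le
          · rw [← h, hv0]
        have h5 := pend_sqrt_pos (v x)
        have h6 : v x / Real.sqrt (1 + v x ^ 2) ≤ 0 := div_nonpos_iff.2 (Or.inr ⟨hxn, h5.le⟩)
        linarith
  -- reflection symmetry about T₀ and periodicity
  obtain ⟨T₀, hT₀pos, hvT₀⟩ := hT0
  have href : ∀ t : ℝ, T₀ ≤ t → u (2 * T₀ - t) = u t := by
    have hz : ∀ r : ℝ, HasDerivAt (fun s => (u (2 * T₀ - s), -v (2 * T₀ - s)))
        ((fun p : ℝ × ℝ => (pendG p.2, κ * p.1)) (u (2 * T₀ - r), -v (2 * T₀ - r))) r := by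
      intro r
      have hinner : HasDerivAt (fun s : ℝ => 2 * T₀ - s) (-1) r :=
        (hasDerivAt_id r).const_sub (2 * T₀)
      have h1 : HasDerivAt (fun s : ℝ => u (2 * T₀ - s))
          (-v (2 * T₀ - r) / Real.sqrt (1 + (-v (2 * T₀ - r)) ^ 2)) r := by
        have := (hu (2 * T₀ - r)).comp r hinner
        refine this.congr_deriv ?_
        rw [neg_sq]
        ring
      have h2 : HasDerivAt (fun s : ℝ => -v (2 * T₀ - s)) (κ * u (2 * T₀ - r)) r := by
        simpa [Function.comp_def, Pi.neg_def] using ((hv (2 * T₀ - r)).comp r hinner).neg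
      exact h1.prodMk h2
    have hTT : 2 * T₀ - T₀ = T₀ := by ring
    have heqT : (fun s : ℝ => (u s, v s)) T₀
        = (fun s : ℝ => (u (2 * T₀ - s), -v (2 * T₀ - s))) T₀ := by
      show (u T₀, v T₀) = (u (2 * T₀ - T₀), -v (2 * T₀ - T₀))
      rw [hTT, hvT₀, neg_zero]
    intro t ht
    have := ode_forward_unique hK hy hz heqT ht
    exact (congrArg Prod.fst this).symm
  refine ⟨⟨2 * T₀, by linarith, ?_⟩, hbound, hiff3, hiff4⟩
  have key : ∀ r : ℝ, -T₀ ≤ r → u (r + 2 * T₀) = u r := by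
    intro r hr
    have h1 := href (T₀ + (T₀ + r)) (by linarith)
    rw [show 2 * T₀ - (T₀ + (T₀ + r)) = -r by ring] at h1
    rw [show T₀ + (T₀ + r) = r + 2 * T₀ by ring] at h1
    rw [← h1, heven r]
  intro r
  rcases le_or_gt (-T₀) r with h | h
  · exact key r h
  · have h2 := key (-r - 2 * T₀) (by linarith)
    rw [show -r - 2 * T₀ + 2 * T₀ = -r by ring] at h2
    rw [heven r] at h2
    rw [show -r - 2 * T₀ = -(r + 2 * T₀) by ring] at h2
    rw [heven (r + 2 * T₀)] at h2
    exact h2.symm
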